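/- Let (a_n)_{n ∈ ℕ} be a sequence of nonnegative real numbers and let ρ > 0 be such that the sequence (ρ^n a_n)_n is nonincreasing. Then for all real numbers z, γ with 0 ≤ z < γ < ρ, the series ∑_n a_n z^n and ∑_n a_n γ^n converge and (ρ − z) ∑_{n=0}^∞ a_n z^n ≥ (ρ − γ) ∑_{n=0}^∞ a_n γ^n; in other words, the function z ↦ (ρ − z) ∑_n a_n z^n is nonincreasing on [0, ρ). -/

import Mathlib

set_option maxHeartbeats 1000000

lemma stmt_9_aux (a : ℕ → ℝ) (ha : ∀ n, 0 ≤ a n) (ρ : ℝ) (hρ : 0 < ρ)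
    (hmono : ∀ n, ρ ^ (n + 1) * a (n + 1) ≤ ρ ^ n * a n)
    (z : ℝ) (hz : 0 ≤ z) (hzρ : z < ρ) : Summable (fun n => a n * z ^ n) := by
  have hbound : ∀ n, ρ ^ n * a n ≤ a 0 := by
    intro n
    induction n with
    | zero => simp
    | succ k ih => exact (hmono k).trans ih
  have hle : ∀ n, a n * z ^ n ≤ a 0 * (z / ρ) ^ n := by
    intro n
    have h1 : a n * z ^ n = (ρ ^ n * a n) * (z / ρ) ^ n := by
      field_simp
      rw [mul_assoc, ← mul_pow]; congr 2; field_simp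
    rw [h1]
    exact mul_le_mul_of_nonneg_right (hbound n) (pow_nonneg (div_nonneg hz hρ.le) n)
  have hg : Summable (fun n => a 0 * (z / ρ) ^ n) :=
    (summable_geometric_of_lt_one (div_nonneg hz hρ.le) ((div_lt_one hρ).2 hzρ)).mul_left _
  exact Summable.of_nonneg_of_le (fun n => mul_nonneg (ha n) (pow_nonneg hz n)) hle hg

/-- **Power series application, nonincreasing case** (Section 4). If `a_n ≥ 0` and
`(ρ^n a_n)_n` is nonincreasing for some `ρ > 0`, then for `0 ≤ z < γ < ρ` the series
`∑ a_n z^n` and `∑ a_n γ^n` converge and `(ρ - z) ∑ a_n z^n ≥ (ρ - γ) ∑ a_n γ^n`,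
i.e. `z ↦ (ρ - z) ∑ a_n z^n` is nonincreasing on `[0, ρ)`. -/
theorem stmt_9 (a : ℕ → ℝ) (ha : ∀ n, 0 ≤ a n) (ρ : ℝ) (hρ : 0 < ρ)
    (hmono : ∀ n, ρ ^ (n + 1) * a (n + 1) ≤ ρ ^ n * a n)
    (z γ : ℝ) (hz : 0 ≤ z) (hzγ : z < γ) (hγρ : γ < ρ) :
    Summable (fun n => a n * z ^ n) ∧ Summable (fun n => a n * γ ^ n) ∧
      (ρ - γ) * ∑' n, a n * γ ^ n ≤ (ρ - z) * ∑' n, a n * z ^ n := by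
  have hγ : (0:ℝ) ≤ γ := hz.trans hzγ.le
  have hzρ : z < ρ := hzγ.trans hγρ
  have hsz := stmt_9_aux a ha ρ hρ hmono z hz hzρ
  have hsγ := stmt_9_aux a ha ρ hρ hmono γ hγ hγρ
  refine ⟨hsz, hsγ, ?_⟩
  set b : ℕ → ℝ := fun n => a n - ρ * a (n + 1) with hb_def
  have hb : ∀ n, 0 ≤ b n := by
    intro n
    have := hmono n
    have hpow : (0:ℝ) < ρ ^ n := pow_pos hρ n
    have : ρ * a (n + 1) ≤ a n := by
      rw [pow_succ, mul_assoc] at this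
      exact le_of_mul_le_mul_left this hpow
    simpa [hb_def] using sub_nonneg.2 this
  -- key identity
  have key : ∀ x : ℝ, 0 ≤ x → x < ρ →
      (ρ - x) * ∑' n, a n * x ^ n = ρ * a 0 - ∑' n, b n * x ^ (n + 1) ∧
      Summable (fun n => b n * x ^ (n + 1)) := by
    intro x hx hxρ
    have hs := stmt_9_aux a ha ρ hρ hmono x hx hxρ
    have hshift : Summable (fun n => a (n + 1) * x ^ (n + 1)) :=
      (summable_nat_add_iff 1).2 hs
    have hs1 : Summable (fun n => x * (a n * x ^ n)) := hs.mul_left x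
    have hs2 : Summable (fun n => ρ * (a (n + 1) * x ^ (n + 1))) := hshift.mul_left ρ
    have heq : ∀ n, b n * x ^ (n + 1)
        = x * (a n * x ^ n) - ρ * (a (n + 1) * x ^ (n + 1)) := by
      intro n; simp only [hb_def]; ring
    have hsb : Summable (fun n => b n * x ^ (n + 1)) := by
      simpa only [← heq] using hs1.sub hs2
    constructor
    · have h1 : ∑' n, b n * x ^ (n + 1)
          = x * ∑' n, a n * x ^ n - ρ * ∑' n, a (n + 1) * x ^ (n + 1) := by
        calc ∑' n, b n * x ^ (n + 1)
            = ∑' n, (x * (a n * x ^ n) - ρ * (a (n + 1) * x ^ (n + 1))) := tsum_congr heq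
          _ = (∑' n, x * (a n * x ^ n)) - ∑' n, ρ * (a (n + 1) * x ^ (n + 1)) :=
              Summable.tsum_sub hs1 hs2
          _ = x * ∑' n, a n * x ^ n - ρ * ∑' n, a (n + 1) * x ^ (n + 1) := by
              rw [tsum_mul_left, tsum_mul_left]
      have h2 : ∑' n, a n * x ^ n = a 0 * x ^ 0 + ∑' n, a (n + 1) * x ^ (n + 1) :=
        Summable.tsum_eq_zero_add hs
      rw [h1]
      simp only [pow_zero, mul_one] at h2
      rw [h2]; ring
    · exact hsb
  obtain ⟨kz, hsbz⟩ := key z hz hzρ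
  obtain ⟨kγ, hsbγ⟩ := key γ hγ hγρ
  rw [kz, kγ]
  have : ∑' n, b n * z ^ (n + 1) ≤ ∑' n, b n * γ ^ (n + 1) := by
    apply Summable.tsum_le_tsum _ hsbz hsbγ
    intro n
    exact mul_le_mul_of_nonneg_left (pow_le_pow_left₀ hz hzγ.le (n + 1)) (hb n)
  linarith
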